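/- Let K be a positive integer, n > 0 and α real numbers with n + α > 0. For u, m : Fin K → ℝ define ū(k) = ((n+α)/n)^n · u(k) and m̄(k) = n·(m(k)+α)/(n+α). Let F : (Fin K → ℝ) → (Fin K → ℝ) → ℝ be everywhere positive, and suppose that for each index k and all u, m the map t ↦ F(update(u,k,t), m) is differentiable (where update(u,k,t) replaces the k-th entry of u by t), and that F satisfies log F(u, m) = (n/(n+α)) · log F(ū, m̄) for all u, m. Then for every index k and all u, m: (∂F/∂u_k)(u, m) / F(u, m) = ((n+α)/n)^{n−1} · (∂F/∂u_k)(ū, m̄) / F(ū, m̄), where (∂F/∂u_k)(u,m) denotes the derivative of t ↦ F(update(u,k,t), m) at t = u(k). -/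

import Mathlib

/-- If a positive function `F` satisfies
`log F(u, m) = (n/(n+α)) · log F(ū, m̄)` and its partial maps in each `u`-slot are
differentiable, then the logarithmic partial derivative `Λ_{u,k} = F_{u,k}/F` satisfies the
linear functional equation `Λ_{u,k}(u, m) = ((n+α)/n)^{n-1} · Λ_{u,k}(ū, m̄)`. -/
theorem lambda_linear_functional_equation (K : ℕ) (hK : 0 < K)
    (n α : ℝ) (hn : 0 < n) (hna : 0 < n + α)
    (F : (Fin K → ℝ) → (Fin K → ℝ) → ℝ)
    (hFpos : ∀ u m : Fin K → ℝ, 0 < F u m)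
    (hdiff : ∀ (k : Fin K) (u m : Fin K → ℝ),
      Differentiable ℝ (fun t => F (Function.update u k t) m))
    (hF : ∀ u m : Fin K → ℝ,
      Real.log (F u m) = (n / (n + α)) *
        Real.log (F (fun k => ((n + α) / n) ^ n * u k)
          (fun k => n * (m k + α) / (n + α)))) :
    ∀ (k : Fin K) (u m : Fin K → ℝ),
      deriv (fun t => F (Function.update u k t) m) (u k) / F u m
        = ((n + α) / n) ^ (n - 1) *
          (deriv (fun t => F (Function.update (fun j => ((n + α) / n) ^ n * u j) k t)
              (fun j => n * (m j + α) / (n + α))) (((n + α) / n) ^ n * u k)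
            / F (fun j => ((n + α) / n) ^ n * u j) (fun j => n * (m j + α) / (n + α))) := by
  intro k u m
  set c : ℝ := ((n + α) / n) ^ n with hc
  have hbpos : (0:ℝ) < (n + α) / n := div_pos hna hn
  have hcpos : 0 < c := Real.rpow_pos_of_pos hbpos n
  set ub : Fin K → ℝ := fun j => c * u j with hub
  set mb : Fin K → ℝ := fun j => n * (m j + α) / (n + α) with hmb
  set g : ℝ → ℝ := fun t => F (Function.update u k t) m with hg
  set h : ℝ → ℝ := fun t => F (Function.update ub k t) mb with hh
  -- function equality of logs
  have hfun : (fun t => Real.log (g t)) =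
      (fun t => (n / (n + α)) * Real.log (h (c * t))) := by
    funext t
    have := hF (Function.update u k t) m
    have hupd : (fun j => c * (Function.update u k t) j)
        = Function.update ub k (c * t) := by
      funext j
      rcases eq_or_ne j k with rfl | hj
      · simp
      · simp [Function.update_apply, hj, hub]
    simpa [hg, hh, hmb, hupd] using this
  have hgd : HasDerivAt g (deriv g (u k)) (u k) :=
    ((hdiff k u m).differentiableAt).hasDerivAt
  have hhd : HasDerivAt h (deriv h (c * u k)) (c * u k) :=
    ((hdiff k ub mb).differentiableAt).hasDerivAt
  have hgpos : 0 < g (u k) := hFpos _ _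
  have hhpos : 0 < h (c * u k) := hFpos _ _
  -- derivative of LHS
  have hL : HasDerivAt (fun t => Real.log (g t)) (deriv g (u k) / g (u k)) (u k) :=
    hgd.log (ne_of_gt hgpos)
  -- derivative of RHS
  have hlin : HasDerivAt (fun t : ℝ => c * t) c (u k) := by
    simpa using (hasDerivAt_id (u k)).const_mul c
  have hcomp : HasDerivAt (fun t => h (c * t)) (deriv h (c * u k) * c) (u k) :=
    HasDerivAt.comp (u k) hhd hlin
  have hR : HasDerivAt (fun t => (n / (n + α)) * Real.log (h (c * t)))
      ((n / (n + α)) * (deriv h (c * u k) / h (c * u k) * c)) (u k) := by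
    exact ((hcomp.log (ne_of_gt hhpos)).const_mul (n / (n + α))).congr_deriv (by ring)
  have hderiv_eq : deriv g (u k) / g (u k)
      = (n / (n + α)) * (deriv h (c * u k) / h (c * u k) * c) := by
    have := hR
    rw [← hfun] at this
    exact hL.unique this
  have e1 : F u m = g (u k) := by simp [hg]
  have e2 : F ub mb = h (c * u k) := by
    show F ub mb = F (Function.update ub k (ub k)) mb
    rw [Function.update_eq_self]
  rw [e1, e2, hderiv_eq]
  have hrw : ((n + α) / n) ^ (n - 1) = c * (n / (n + α)) := by
    rw [hc, Real.rpow_sub hbpos, Real.rpow_one]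
    field_simp
  rw [hrw]
  ring
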